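/- Let c be a real number with 0 < c ≤ 1 and let q : ℕ → ℝ satisfy q(0) = 0 and q(t+1) = q(t) + c·exp(−q(t)) for all t ∈ ℕ. Then q(t) ≥ 0 for all t, and for every T ∈ ℕ one has log(1 + c·T) ≤ q(T) ≤ log(1 + 2·c·T); in particular q(T) grows as Θ(log T). -/
import Mathlib

lemma exp_le_one_add_two_mul {x : ℝ} (hx0 : 0 ≤ x) (hx1 : x ≤ 1) :
    Real.exp x ≤ 1 + 2 * x := by
  have hconv := convexOn_exp.2 (Set.mem_univ (0:ℝ)) (Set.mem_univ (1:ℝ))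
    (by linarith : (0:ℝ) ≤ 1 - x) hx0 (by ring : (1 - x) + x = 1)
  simp only [smul_eq_mul, mul_zero, mul_one, zero_add, Real.exp_zero] at hconv
  have he : Real.exp 1 ≤ 3 := by
    have := Real.exp_one_lt_d9; linarith
  nlinarith

/-- growth of the attention-score recursion `q(t+1) = q(t) + c·exp(−q(t))`
with `q(0) = 0` and `0 < c ≤ 1`: `q` stays nonnegative and
`log(1 + c·T) ≤ q(T) ≤ log(1 + 2·c·T)`, i.e. `q(T) = Θ(log T)`. -/
theorem attention_score_log_growth (c : ℝ) (hc0 : 0 < c) (hc1 : c ≤ 1)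
    (q : ℕ → ℝ) (h0 : q 0 = 0)
    (hrec : ∀ t : ℕ, q (t + 1) = q t + c * Real.exp (-(q t))) :
    (∀ t : ℕ, 0 ≤ q t) ∧
      ∀ T : ℕ, Real.log (1 + c * T) ≤ q T ∧ q T ≤ Real.log (1 + 2 * c * T) := by
  have key : ∀ t : ℕ, 1 + c * t ≤ Real.exp (q t) ∧ Real.exp (q t) ≤ 1 + 2 * c * t := by
    intro t
    induction t with
    | zero => simp [h0]
    | succ n ih =>
      obtain ⟨hlo, hhi⟩ := ih
      have hqn : 0 ≤ q n := by
        have h1 : (1:ℝ) ≤ Real.exp (q n) := by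
          have : 0 ≤ c * n := by positivity
          linarith
        have := Real.exp_le_exp.mpr (le_of_eq (rfl : q n = q n))
        nlinarith [Real.log_le_log (by norm_num) h1, Real.log_exp (q n), Real.log_one]
      set x := c * Real.exp (-(q n)) with hx
      have hxpos : 0 < x := by positivity
      have hx1 : x ≤ 1 := by
        have : Real.exp (-(q n)) ≤ 1 := Real.exp_le_one_iff.mpr (by linarith)
        nlinarith
      have hsplit : Real.exp (q (n+1)) = Real.exp (q n) * Real.exp x := by
        rw [hrec n, Real.exp_add]
      have hprod : Real.exp (q n) * x = c := by
        rw [hx, ← mul_assoc, mul_comm (Real.exp (q n)) c, mul_assoc,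
          ← Real.exp_add]
        simp
      constructor
      · have h1x : 1 + x ≤ Real.exp x := by linarith [Real.add_one_le_exp x]
        have := mul_le_mul_of_nonneg_left h1x (Real.exp_nonneg (q n))
        push_cast
        nlinarith
      · have h2x : Real.exp x ≤ 1 + 2 * x := exp_le_one_add_two_mul hxpos.le hx1
        have := mul_le_mul_of_nonneg_left h2x (Real.exp_nonneg (q n))
        push_cast
        nlinarith
  have hnn : ∀ t : ℕ, 0 ≤ q t := by
    intro t
    have h1 : (1:ℝ) ≤ Real.exp (q t) := by
      have : 0 ≤ c * t := by positivity
      linarith [(key t).1]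
    nlinarith [Real.log_le_log (by norm_num : (0:ℝ) < 1) h1, Real.log_exp (q t), Real.log_one]
  refine ⟨hnn, fun T => ?_⟩
  obtain ⟨hlo, hhi⟩ := key T
  constructor
  · have := Real.log_le_log (by positivity) hlo
    rwa [Real.log_exp] at this
  · have := Real.log_le_log (Real.exp_pos _) hhi
    rwa [Real.log_exp] at this
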